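/- Let ω = e^{i2π/3}, f(z) = -(z-ω)²/((z-1)(z+2)(z+1/2)), g(z) = -(z-ω)²/(z(z+1)). For every ζ in the open upper half plane avoiding poles of f and g, (|f(conj(ζ))|² - |f(ζ)|²)·(|g(conj(ζ))|² - |g(ζ)|²) > 0. -/

import Mathlib

open Complex

noncomputable def hexFfac (z : ℂ) : ℂ :=
  -(z - Complex.exp (2 * Real.pi * Complex.I / 3))^2 / ((z - 1) * (z + 2) * (z + 1/2))

noncomputable def hexGfac (z : ℂ) : ℂ :=
  -(z - Complex.exp (2 * Real.pi * Complex.I / 3))^2 / (z * (z + 1))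

theorem stmt_9 :
    ∀ ζ : ℂ, 0 < ζ.im → ζ ∉ ({1, -2, -1/2, 0, -1} : Set ℂ) →
      0 < (‖hexFfac (starRingEnd ℂ ζ)‖^2 - ‖hexFfac ζ‖^2)
        * (‖hexGfac (starRingEnd ℂ ζ)‖^2 - ‖hexGfac ζ‖^2) := by
  intro ζ him hζ
  simp only [Set.mem_insert_iff, Set.mem_singleton_iff, not_or] at hζ
  obtain ⟨h1, h2, h3, h4, h5⟩ := hζ
  set ω : ℂ := Complex.exp (2 * Real.pi * Complex.I / 3) with hω
  have hωim : 0 < ω.im := by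
    have h : (2 * Real.pi * Complex.I / 3 : ℂ) = ((2 * Real.pi / 3 : ℝ) : ℂ) * Complex.I := by
      push_cast; ring
    rw [hω, h, Complex.exp_ofReal_mul_I_im]
    apply Real.sin_pos_of_pos_of_lt_pi
    · positivity
    · nlinarith [Real.pi_pos]
  set m := ‖ζ - ω‖ with hm
  set n := ‖ζ - (starRingEnd ℂ) ω‖ with hn
  set d1 := ‖(ζ - 1) * (ζ + 2) * (ζ + 1/2)‖ with hd1def
  set d2 := ‖ζ * (ζ + 1)‖ with hd2def
  have hd1 : 0 < d1 := by
    rw [hd1def]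
    apply norm_pos_iff.mpr
    exact mul_ne_zero (mul_ne_zero (sub_ne_zero.mpr h1)
      (fun h => h2 (by linear_combination h)))
      (fun h => h3 (by linear_combination h))
  have hd2 : 0 < d2 := by
    rw [hd2def]
    apply norm_pos_iff.mpr
    exact mul_ne_zero h4 (fun h => h5 (by linear_combination h))
  have habsneg : ∀ z : ℂ, ‖-(z)^2‖ = ‖z‖^2 := by
    intro z; rw [norm_neg, norm_pow]
  have hFζ : ‖hexFfac ζ‖ = m^2 / d1 := by
    rw [hexFfac, norm_div, habsneg, hm, hd1def]
  have hGζ : ‖hexGfac ζ‖ = m^2 / d2 := by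
    rw [hexGfac, norm_div, habsneg, hm, hd2def]
  have hnum : ‖(starRingEnd ℂ) ζ - ω‖ = n := by
    rw [hn, ← Complex.norm_conj (ζ - (starRingEnd ℂ) ω)]
    congr 1
    simp [map_sub]
  have hFζ' : ‖hexFfac ((starRingEnd ℂ) ζ)‖ = n^2 / d1 := by
    rw [hexFfac, norm_div, habsneg, hnum, hd1def]
    congr 1
    rw [← Complex.norm_conj ((ζ - 1) * (ζ + 2) * (ζ + 1/2))]
    congr 1
    simp [map_mul, map_sub, map_add, map_inv₀, map_ofNat]
  have hGζ' : ‖hexGfac ((starRingEnd ℂ) ζ)‖ = n^2 / d2 := by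
    rw [hexGfac, norm_div, habsneg, hnum, hd2def]
    congr 1
    rw [← Complex.norm_conj (ζ * (ζ + 1))]
    congr 1
    simp [map_mul, map_add]
  have hmn : m^2 < n^2 := by
    have e : m^2 + 4 * ζ.im * ω.im = n^2 := by
      rw [hm, hn, Complex.sq_norm, Complex.sq_norm]
      simp [Complex.normSq_apply, Complex.sub_re, Complex.sub_im, Complex.conj_re,
        Complex.conj_im]
      ring
    nlinarith
  have hm0 : 0 ≤ m := norm_nonneg _
  rw [hFζ, hGζ, hFζ', hGζ']
  have key : ∀ d : ℝ, 0 < d → 0 < (n^2/d)^2 - (m^2/d)^2 := by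
    intro d hd
    have h1 : m^2/d < n^2/d := by gcongr
    have h0 : 0 ≤ m^2/d := by positivity
    have := pow_lt_pow_left₀ h1 h0 two_ne_zero
    linarith
  exact mul_pos (key d1 hd1) (key d2 hd2)
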